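/- Let H be a complex Hilbert space, B a linear operator with domain Dom(B) ⊆ H, and λ a complex number such that B − λ : Dom(B) → H is bijective. Then a pair of complementary subspaces U and V of H decomposes B if and only if both U and V are invariant for B and both are invariant under the everywhere defined inverse (B − λ)⁻¹ : H → H, i.e. (B − λ)⁻¹U ⊆ U and (B − λ)⁻¹V ⊆ V. -/
import Mathlib


noncomputable section

/-- A subspace `U` of `H` is *invariant* for a linear operator `T` with domain `dom ⊆ H`
if `T x ∈ U` for every `x ∈ dom ∩ U`. -/
def InvariantFor {H : Type*} [AddCommGroup H] [Module ℂ H]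
    (T : H →ₗ[ℂ] H) (dom U : Submodule ℂ H) : Prop :=
  ∀ x ∈ dom, x ∈ U → T x ∈ U

/-- Let `B` be an operator with domain `dom` in a Hilbert space `H` and
`lam` a complex number such that `B − lam : dom → H` is bijective, with (everywhere defined)
inverse `R = (B − lam)⁻¹ : H → H`.  A pair of complementary subspaces `U`, `V` decomposes `B`
(i.e. both are invariant for `B` and the domain splits as `dom = (dom ∩ U) + (dom ∩ V)`) if
and only if both `U` and `V` are invariant for `B` and invariant under `R`. -/
theorem decomposes_iff_invariant_for_resolvent
    {H : Type*} [NormedAddCommGroup H] [InnerProductSpace ℂ H] [CompleteSpace H]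
    (B : H →ₗ[ℂ] H) (dom : Submodule ℂ H) (U V : Submodule ℂ H)
    (hsum : U ⊔ V = ⊤) (hdisj : U ⊓ V = ⊥) (lam : ℂ)
    (hbij : Function.Bijective fun x : dom => B (x : H) - lam • (x : H))
    (R : H → H) (hR : ∀ y : H, R y ∈ dom ∧ B (R y) - lam • R y = y) :
    (InvariantFor B dom U ∧ InvariantFor B dom V ∧ dom = dom ⊓ U ⊔ dom ⊓ V) ↔
      (InvariantFor B dom U ∧ InvariantFor B dom V ∧
        (∀ y ∈ U, R y ∈ U) ∧ (∀ y ∈ V, R y ∈ V)) := by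
  have hinj : ∀ x ∈ dom, ∀ x' ∈ dom,
      B x - lam • x = B x' - lam • x' → x = x' := by
    intro x hx x' hx' h
    have := hbij.injective (a₁ := ⟨x, hx⟩) (a₂ := ⟨x', hx'⟩) h
    exact congrArg Subtype.val this
  constructor
  · rintro ⟨hU, hV, hdec⟩
    refine ⟨hU, hV, ?_, ?_⟩
    · -- R preserves U
      intro y hy
      obtain ⟨hRdom, hRy⟩ := hR y
      have hmem : R y ∈ dom ⊓ U ⊔ dom ⊓ V := hdec ▸ hRdom
      rw [Submodule.mem_sup] at hmem
      obtain ⟨u, hu, v, hv, huv⟩ := hmem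
      -- y = (B u - lam u) + (B v - lam v), with y ∈ U
      have hBu : B u - lam • u ∈ U := U.sub_mem (hU u hu.1 hu.2) (U.smul_mem _ hu.2)
      have hBv : B v - lam • v ∈ V := V.sub_mem (hV v hv.1 hv.2) (V.smul_mem _ hv.2)
      have hsplit : y = (B u - lam • u) + (B v - lam • v) := by
        rw [← hRy, ← huv]; simp [map_add, smul_add]; abel
      have hv0 : B v - lam • v ∈ U ⊓ V := by
        refine ⟨?_, hBv⟩
        have : B v - lam • v = y - (B u - lam • u) := by rw [hsplit]; abel
        rw [this]; exact U.sub_mem hy hBu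
      rw [hdisj, Submodule.mem_bot] at hv0
      have hveq : v = 0 := by
        apply hinj v hv.1 0 dom.zero_mem
        simp [hv0]
      rw [← huv, hveq, add_zero]; exact hu.2
    · -- R preserves V (symmetric)
      intro y hy
      obtain ⟨hRdom, hRy⟩ := hR y
      have hmem : R y ∈ dom ⊓ U ⊔ dom ⊓ V := hdec ▸ hRdom
      rw [Submodule.mem_sup] at hmem
      obtain ⟨u, hu, v, hv, huv⟩ := hmem
      have hBu : B u - lam • u ∈ U := U.sub_mem (hU u hu.1 hu.2) (U.smul_mem _ hu.2)
      have hBv : B v - lam • v ∈ V := V.sub_mem (hV v hv.1 hv.2) (V.smul_mem _ hv.2)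
      have hsplit : y = (B u - lam • u) + (B v - lam • v) := by
        rw [← hRy, ← huv]; simp [map_add, smul_add]; abel
      have hu0 : B u - lam • u ∈ U ⊓ V := by
        refine ⟨hBu, ?_⟩
        have : B u - lam • u = y - (B v - lam • v) := by rw [hsplit]; abel
        rw [this]; exact V.sub_mem hy hBv
      rw [hdisj, Submodule.mem_bot] at hu0
      have hueq : u = 0 := by
        apply hinj u hu.1 0 dom.zero_mem
        simp [hu0]
      rw [← huv, hueq, zero_add]; exact hv.2
  · rintro ⟨hU, hV, hRU, hRV⟩
    refine ⟨hU, hV, le_antisymm ?_ (sup_le inf_le_left inf_le_left)⟩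
    intro x hx
    set y := B x - lam • x with hy
    have hytop : y ∈ U ⊔ V := hsum ▸ Submodule.mem_top
    rw [Submodule.mem_sup] at hytop
    obtain ⟨u, hu, v, hv, huv⟩ := hytop
    obtain ⟨hRu, hRu'⟩ := hR u
    obtain ⟨hRv, hRv'⟩ := hR v
    have hxeq : x = R u + R v := by
      apply hinj x hx (R u + R v) (dom.add_mem hRu hRv)
      rw [← hy]
      have : B (R u + R v) - lam • (R u + R v)
          = (B (R u) - lam • R u) + (B (R v) - lam • R v) := by
        simp [map_add, smul_add]; abel
      rw [this, hRu', hRv', huv]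
    rw [hxeq]
    exact Submodule.add_mem_sup ⟨hRu, hRU u hu⟩ ⟨hRv, hRV v hv⟩
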